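/- For any M ∈ ℂ^{N×N}, the right derivative of t ↦ ‖e^{Mt}‖₂ at t = 0 equals the numerical abscissa ω(M); in particular, if ω(M) > 0 then there exists t > 0 with ‖e^{Mt}‖₂ > 1. -/

import Mathlib

set_option maxHeartbeats 1000000
set_option synthInstance.maxHeartbeats 400000

open scoped Matrix
open Complex Real

/-- The numerical range of a square complex matrix. -/
def numRange {N : ℕ} (M : Matrix (Fin N) (Fin N) ℂ) : Set ℂ :=
  {z | ∃ x : EuclideanSpace ℂ (Fin N), ‖x‖ = 1 ∧ star (x : Fin N → ℂ) ⬝ᵥ M.mulVec x = z}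

/-- The numerical abscissa of a square complex matrix. -/
noncomputable def numAbs {N : ℕ} (M : Matrix (Fin N) (Fin N) ℂ) : ℝ :=
  sSup {r : ℝ | ∃ x : EuclideanSpace ℂ (Fin N), ‖x‖ = 1 ∧ (star (x : Fin N → ℂ) ⬝ᵥ M.mulVec x).re = r}

/-- The spectral (operator 2-)norm of a square complex matrix. -/
noncomputable def spec2 {N : ℕ} (M : Matrix (Fin N) (Fin N) ℂ) : ℝ :=
  ‖Matrix.toEuclideanCLM (𝕜 := ℂ) M‖

/-- The squared Frobenius norm of a square complex matrix. -/
noncomputable def frobSq {N : ℕ} (M : Matrix (Fin N) (Fin N) ℂ) : ℝ :=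
  ∑ i, ∑ j, ‖M i j‖ ^ 2

section Aux

open NormedSpace

attribute [local instance] Matrix.linftyOpNormedRing Matrix.linftyOpNormedAlgebra

lemma continuous_toECLM (N : ℕ) :
    Continuous (fun X : Matrix (Fin N) (Fin N) ℂ => (Matrix.toEuclideanCLM (𝕜 := ℂ) X :
      EuclideanSpace ℂ (Fin N) →L[ℂ] EuclideanSpace ℂ (Fin N))) :=
  LinearMap.continuous_of_finiteDimensional
    ({ toFun := fun X => Matrix.toEuclideanCLM (𝕜 := ℂ) X
       map_add' := fun X Y => map_add _ X Y
       map_smul' := fun c X => map_smul _ c X } : Matrix (Fin N) (Fin N) ℂ →ₗ[ℂ] _)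

lemma spec2_exp {N : ℕ} (M : Matrix (Fin N) (Fin N) ℂ) (t : ℝ) :
    spec2 (exp ((t : ℂ) • M)) = ‖exp (t • (Matrix.toEuclideanCLM (𝕜 := ℂ) M :
      EuclideanSpace ℂ (Fin N) →L[ℂ] EuclideanSpace ℂ (Fin N)))‖ := by
  erw [spec2, map_exp (Matrix.toEuclideanCLM (𝕜 := ℂ)) (continuous_toECLM N), map_smul]
  rfl

lemma inner_A {N : ℕ} (M : Matrix (Fin N) (Fin N) ℂ) (x : EuclideanSpace ℂ (Fin N)) :
    (inner ℂ x (Matrix.toEuclideanCLM (𝕜 := ℂ) M x) : ℂ) = star (x : Fin N → ℂ) ⬝ᵥ M.mulVec x := by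
  simp [EuclideanSpace.inner_eq_star_dotProduct, dotProduct_comm]

end Aux

/-- The right derivative of t ↦ ‖e^{Mt}‖₂ at t = 0 is the numerical abscissa ω(M);
in particular if ω(M) > 0 then ‖e^{Mt}‖₂ > 1 for some t > 0. -/
theorem stmt7 {N : ℕ} (M : Matrix (Fin N) (Fin N) ℂ) :
    HasDerivWithinAt (fun t : ℝ => spec2 (NormedSpace.exp ((t : ℂ) • M)))
        (numAbs M) (Set.Ici 0) 0 ∧
      (0 < numAbs M →
        ∃ t : ℝ, 0 < t ∧ 1 < spec2 (NormedSpace.exp ((t : ℂ) • M))) := by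
  classical
  rcases Nat.eq_zero_or_pos N with hN | hN
  · -- trivial case N = 0
    subst hN
    haveI : Subsingleton (EuclideanSpace ℂ (Fin 0)) := inferInstance
    have hzero : ∀ t : ℝ, spec2 (NormedSpace.exp ((t : ℂ) • M)) = 0 := by
      intro t
      rw [spec2]
      rw [Subsingleton.elim (Matrix.toEuclideanCLM (𝕜 := ℂ) (NormedSpace.exp ((t : ℂ) • M)))
        (0 : EuclideanSpace ℂ (Fin 0) →L[ℂ] EuclideanSpace ℂ (Fin 0))]
      exact norm_zero
    have hset : {r : ℝ | ∃ x : EuclideanSpace ℂ (Fin 0), ‖x‖ = 1 ∧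
        (star (x : Fin 0 → ℂ) ⬝ᵥ M.mulVec x).re = r} = ∅ := by
      ext r
      simp only [Set.mem_setOf_eq, Set.mem_empty_iff_false, iff_false]
      rintro ⟨x, hx, -⟩
      rw [Subsingleton.elim x 0, norm_zero] at hx
      exact one_ne_zero hx.symm
    have hnum : numAbs M = 0 := by rw [numAbs, hset, Real.sSup_empty]
    rw [hnum]
    constructor
    · have : (fun t : ℝ => spec2 (NormedSpace.exp ((t : ℂ) • M))) = fun _ : ℝ => (0 : ℝ) :=
        funext hzero
      rw [this]
      exact hasDerivWithinAt_const 0 _ 0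
    · intro h; exact absurd h (lt_irrefl 0)
  · -- main case N > 0
    haveI : Nontrivial (EuclideanSpace ℂ (Fin N)) :=
      nontrivial_of_ne (EuclideanSpace.single ⟨0, hN⟩ 1) 0 (by
        intro h
        have := congrArg (fun v : EuclideanSpace ℂ (Fin N) => v ⟨0, hN⟩) h
        simp [EuclideanSpace.single_apply] at this)
    set E := EuclideanSpace ℂ (Fin N)
    set A : E →L[ℂ] E := Matrix.toEuclideanCLM (𝕜 := ℂ) M with hA
    set g : E → ℝ := fun x => (inner ℂ x (A x) : ℂ).re with hg
    have hgcont : Continuous g := Complex.continuous_re.comp (continuous_id.inner A.continuous)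
    obtain ⟨x₀, hx₀mem, hmax⟩ := (isCompact_sphere (0 : E) 1).exists_isMaxOn
      (NormedSpace.sphere_nonempty.mpr zero_le_one) hgcont.continuousOn
    have hx₀ : ‖x₀‖ = 1 := by rwa [mem_sphere_zero_iff_norm] at hx₀mem
    have hmax' : ∀ x : E, ‖x‖ = 1 → g x ≤ g x₀ := fun x hx =>
      hmax (by rwa [mem_sphere_zero_iff_norm])
    have hgr : IsGreatest {r : ℝ | ∃ x : EuclideanSpace ℂ (Fin N), ‖x‖ = 1 ∧
        (star (x : Fin N → ℂ) ⬝ᵥ M.mulVec x).re = r} (g x₀) := by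
      constructor
      · exact ⟨x₀, hx₀, by rw [← inner_A M x₀]⟩
      · rintro r ⟨y, hy, rfl⟩
        rw [← inner_A M y]
        exact hmax' y hy
    have hω : numAbs M = g x₀ := hgr.csSup_eq
    set ω := numAbs M with hωdef
    have hub : ∀ x : E, ‖x‖ = 1 → (inner ℂ x (A x) : ℂ).re ≤ ω := fun x hx =>
      hω ▸ hmax' x hx
    have hgx₀ : (inner ℂ x₀ (A x₀) : ℂ).re = ω := hω.symm
    -- |ω| ≤ ‖A‖
    have hωabs : |ω| ≤ ‖A‖ := by
      rw [← hgx₀]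
      calc |(inner ℂ x₀ (A x₀) : ℂ).re| ≤ ‖(inner ℂ x₀ (A x₀) : ℂ)‖ :=
            Complex.abs_re_le_norm _
        _ = ‖(inner ℂ x₀ (A x₀) : ℂ)‖ := rfl
        _ ≤ ‖x₀‖ * ‖A x₀‖ := norm_inner_le_norm _ _
        _ = ‖A x₀‖ := by rw [hx₀, one_mul]
        _ ≤ ‖A‖ := by simpa [hx₀] using A.le_opNorm x₀
    -- the remainder
    set r : ℝ → (E →L[ℂ] E) := fun t => NormedSpace.exp (t • A) - 1 - t • A with hrdef
    have hderiv : HasDerivAt (fun u : ℝ => NormedSpace.exp (u • A)) A 0 := by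
      have h := hasDerivAt_exp_smul_const (𝕂 := ℝ) A 0
      have h0 : (0 : ℝ) • A = 0 := zero_smul ℝ A
      rw [h0, NormedSpace.exp_zero, one_mul] at h
      exact h
    have hlittle : (fun t : ℝ => r t) =o[nhds 0] (fun t : ℝ => t) := by
      have h := hasDerivAt_iff_isLittleO.mp hderiv
      have h0 : (0 : ℝ) • A = 0 := zero_smul ℝ A
      simp only [h0, NormedSpace.exp_zero, sub_zero] at h
      exact h
    -- the pointwise expansion: for unit x and t ≥ 0
    have happly : ∀ (t : ℝ) (x : E), NormedSpace.exp (t • A) x = x + t • A x + r t x := by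
      intro t x
      simp only [hrdef, ContinuousLinearMap.sub_apply, ContinuousLinearMap.one_apply,
        ContinuousLinearMap.smul_apply]
      abel
    have hnormsq : ∀ (t : ℝ) (x : E), 0 ≤ t → ‖x‖ = 1 →
        ‖x + t • A x‖ ^ 2 = 1 + 2 * (t * (inner ℂ x (A x) : ℂ).re) + t ^ 2 * ‖A x‖ ^ 2 := by
      intro t x ht hx
      have hts : (t : ℂ) • A x = t • A x := rfl
      have hinner : (inner ℂ x (t • A x) : ℂ).re = t * (inner ℂ x (A x) : ℂ).re := by
        rw [← hts, inner_smul_right]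
        exact Complex.re_ofReal_mul t _
      have hns := @norm_add_sq ℂ E _ _ _ x (t • A x)
      simp only [RCLike.re_to_complex] at hns
      rw [hns, hx, hinner, norm_smul, Real.norm_eq_abs, _root_.abs_of_nonneg ht]
      ring
    -- lower bound (valid for all t ≥ 0)
    have hlow : ∀ t : ℝ, 0 ≤ t →
        1 + t * ω - ‖r t‖ ≤ ‖NormedSpace.exp (t • A)‖ := by
      intro t ht
      set f := NormedSpace.exp (t • A)
      have h1 : (inner ℂ x₀ (f x₀) : ℂ).re ≤ ‖f‖ := by
        calc (inner ℂ x₀ (f x₀) : ℂ).re ≤ ‖(inner ℂ x₀ (f x₀) : ℂ)‖ := Complex.re_le_norm _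
          _ = ‖(inner ℂ x₀ (f x₀) : ℂ)‖ := rfl
          _ ≤ ‖x₀‖ * ‖f x₀‖ := norm_inner_le_norm _ _
          _ = ‖f x₀‖ := by rw [hx₀, one_mul]
          _ ≤ ‖f‖ := by simpa [hx₀] using f.le_opNorm x₀
      have h2 : (inner ℂ x₀ (f x₀) : ℂ).re = 1 + t * ω + (inner ℂ x₀ (r t x₀) : ℂ).re := by
        rw [show f x₀ = x₀ + t • A x₀ + r t x₀ from happly t x₀]
        rw [inner_add_right, inner_add_right]
        have hts : (t : ℂ) • A x₀ = t • A x₀ := rfl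
        have hinner : (inner ℂ x₀ (t • A x₀) : ℂ).re = t * (inner ℂ x₀ (A x₀) : ℂ).re := by
          rw [← hts, inner_smul_right]; exact Complex.re_ofReal_mul t _
        have hself : (inner ℂ x₀ x₀ : ℂ).re = 1 := by
          have hs := inner_self_eq_norm_sq (𝕜 := ℂ) x₀
          simp only [RCLike.re_to_complex] at hs
          rw [hs, hx₀]; norm_num
        simp only [Complex.add_re, hself, hinner, hgx₀]
      have h3 : -(‖r t‖) ≤ (inner ℂ x₀ (r t x₀) : ℂ).re := by
        have := (abs_le.mp (Complex.abs_re_le_norm (inner ℂ x₀ (r t x₀) : ℂ))).1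
        have hb : ‖(inner ℂ x₀ (r t x₀) : ℂ)‖ ≤ ‖r t‖ := by
          calc ‖(inner ℂ x₀ (r t x₀) : ℂ)‖ = ‖(inner ℂ x₀ (r t x₀) : ℂ)‖ :=
                rfl
            _ ≤ ‖x₀‖ * ‖r t x₀‖ := norm_inner_le_norm _ _
            _ = ‖r t x₀‖ := by rw [hx₀, one_mul]
            _ ≤ ‖r t‖ := by simpa [hx₀] using (r t).le_opNorm x₀
        linarith
      linarith
    -- upper bound (valid for 0 ≤ t with t * (1 + ‖A‖) ≤ 1)
    have hup : ∀ t : ℝ, 0 ≤ t → t * (1 + ‖A‖) ≤ 1 →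
        ‖NormedSpace.exp (t • A)‖ ≤ 1 + t * ω + (‖A‖ ^ 2 / 2) * t ^ 2 + ‖r t‖ := by
      intro t ht htA
      set f := NormedSpace.exp (t • A)
      have hAnn : (0:ℝ) ≤ ‖A‖ := norm_nonneg _
      have hC : (0:ℝ) ≤ 1 + t * ω + (‖A‖ ^ 2 / 2) * t ^ 2 + ‖r t‖ := by
        have h1 : t * ‖A‖ ≤ 1 := le_trans (by nlinarith) htA
        have h2 : -(t * ‖A‖) ≤ t * ω := by nlinarith [abs_le.mp hωabs]
        nlinarith [norm_nonneg (r t), sq_nonneg t, sq_nonneg ‖A‖]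
      rw [show ‖f‖ = ‖f.restrictScalars ℝ‖ from
        (ContinuousLinearMap.norm_restrictScalars (𝕜' := ℝ) f).symm]
      apply ContinuousLinearMap.opNorm_le_of_unit_norm hC
      intro x hx
      have hfx : ‖f x‖ ≤ ‖x + t • A x‖ + ‖r t‖ := by
        rw [happly t x]
        refine le_trans (norm_add_le _ _) ?_
        have : ‖r t x‖ ≤ ‖r t‖ := by simpa [hx] using (r t).le_opNorm x
        linarith
      have hAx : ‖A x‖ ≤ ‖A‖ := by simpa [hx] using A.le_opNorm x
      have hre : (inner ℂ x (A x) : ℂ).re ≤ ω := hub x hx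
      have hsq := hnormsq t x ht hx
      have hkey : ‖x + t • A x‖ ≤ 1 + t * ω + (‖A‖ ^ 2 / 2) * t ^ 2 := by
        have hn : (0:ℝ) ≤ ‖x + t • A x‖ := norm_nonneg _
        have h1 : t * ‖A‖ ≤ 1 := le_trans (by nlinarith) htA
        have h2 : -(t * ‖A‖) ≤ t * ω := by nlinarith [abs_le.mp hωabs]
        have hpos : (0:ℝ) ≤ 1 + t * ω + (‖A‖ ^ 2 / 2) * t ^ 2 := by nlinarith [sq_nonneg t]
        have hAx2 : t ^ 2 * ‖A x‖ ^ 2 ≤ t ^ 2 * ‖A‖ ^ 2 := by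
          have := mul_le_mul hAx hAx (norm_nonneg _) hAnn
          nlinarith [sq_nonneg t]
        nlinarith [sq_nonneg (t * ω + (‖A‖ ^ 2 / 2) * t ^ 2)]
      calc ‖(f.restrictScalars ℝ) x‖ = ‖f x‖ := rfl
        _ ≤ ‖x + t • A x‖ + ‖r t‖ := hfx
        _ ≤ 1 + t * ω + (‖A‖ ^ 2 / 2) * t ^ 2 + ‖r t‖ := by linarith
    -- rewrite the function
    have hF : (fun t : ℝ => spec2 (NormedSpace.exp ((t : ℂ) • M))) =
        fun t : ℝ => ‖NormedSpace.exp (t • A)‖ := funext fun t => spec2_exp M t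
    have hF0 : ‖NormedSpace.exp ((0:ℝ) • A)‖ = 1 := by
      have h0 : (0 : ℝ) • A = 0 := zero_smul ℝ A
      rw [h0, NormedSpace.exp_zero, ContinuousLinearMap.one_def, ContinuousLinearMap.norm_id]
    constructor
    · rw [hF, hasDerivWithinAt_iff_isLittleO]
      have hδ : (0:ℝ) < (1 + ‖A‖)⁻¹ := by positivity
      have hmem : Set.Icc (0:ℝ) ((1 + ‖A‖)⁻¹) ∈ nhdsWithin (0:ℝ) (Set.Ici 0) :=
        Icc_mem_nhdsGE hδ
      have hbigO : (fun t : ℝ => ‖NormedSpace.exp (t • A)‖ - ‖NormedSpace.exp ((0:ℝ) • A)‖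
            - (t - 0) • ω) =O[nhdsWithin 0 (Set.Ici 0)]
          (fun t : ℝ => ‖r t‖ + (‖A‖ ^ 2 / 2) * t ^ 2) := by
        rw [Asymptotics.isBigO_iff]
        refine ⟨1, Filter.eventually_of_mem hmem ?_⟩
        intro t htmem
        obtain ⟨ht0, ht1⟩ := htmem
        have hApos : (0:ℝ) < 1 + ‖A‖ := by positivity
        have htA : t * (1 + ‖A‖) ≤ 1 := by
          have h := mul_le_mul_of_nonneg_right ht1 hApos.le
          rwa [inv_mul_cancel₀ hApos.ne'] at h
        have hu := hup t ht0 htA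
        have hl := hlow t ht0
        have hrhs : (0:ℝ) ≤ ‖r t‖ + (‖A‖ ^ 2 / 2) * t ^ 2 := by positivity
        rw [hF0, smul_eq_mul, sub_zero, one_mul]
        rw [Real.norm_eq_abs, Real.norm_eq_abs, _root_.abs_of_nonneg hrhs]
        rw [abs_le]
        constructor <;> nlinarith
      refine hbigO.trans_isLittleO ?_
      have h1 : (fun t : ℝ => ‖r t‖) =o[nhds (0:ℝ)] (fun t : ℝ => t) := hlittle.norm_left
      have h2 : (fun t : ℝ => (‖A‖ ^ 2 / 2) * t ^ 2) =o[nhds (0:ℝ)] (fun t : ℝ => t) :=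
        (Asymptotics.isLittleO_pow_id (by norm_num : 1 < 2)).const_mul_left _
      have := (h1.add h2).mono (nhdsWithin_le_nhds (s := Set.Ici (0:ℝ)))
      simpa [sub_zero] using this
    · intro hω0
      have hhalf : (0:ℝ) < ω / 2 := by linarith
      have hev : ∀ᶠ t : ℝ in nhdsWithin 0 (Set.Ioi 0), ‖r t‖ ≤ ω / 2 * ‖t‖ :=
        (hlittle.def hhalf).filter_mono nhdsWithin_le_nhds
      have hev2 : ∀ᶠ t : ℝ in nhdsWithin 0 (Set.Ioi 0), t ∈ Set.Ioi (0:ℝ) :=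
        self_mem_nhdsWithin
      obtain ⟨t, h1t, h2t⟩ := (hev.and hev2).exists
      refine ⟨t, h2t, ?_⟩
      rw [spec2_exp M t]
      have hl := hlow t (le_of_lt h2t)
      have : ‖r t‖ ≤ ω / 2 * t := by
        rwa [Real.norm_eq_abs, abs_of_pos h2t] at h1t
      have ht : (0:ℝ) < t := h2t
      nlinarith
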